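/- Let k ≥ 1, let μ ∈ G_k, and for 1 ≤ i ≤ k let μ_i ∈ G_1 denote the i-th marginal of μ (determined by μ_i(X^n) = μ(X_i^n) for all n). The following are equivalent: (1) all mixed coefficients of R_μ vanish, i.e. Cf_{(i_1,…,i_n)}(R_μ) = 0 whenever n ≥ 2 and the indices i_1,…,i_n are not all equal (equivalently, when μ is the distribution of a k-tuple (a_1,…,a_k) in a noncommutative probability space, the elements a_1,…,a_k are freely independent); (2) the LS-transform of μ separates the variables, i.e. there exist one-variable power series u_1,…,u_k with LS_μ(z_1,…,z_k) = u_1(z_1) + ⋯ + u_k(z_k); (3) LS_μ(z_1,…,z_k) = LS_{μ_1}(z_1) + ⋯ + LS_{μ_k}(z_k). -/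

import Mathlib

open scoped TensorProduct

noncomputable section

namespace FreeProb

attribute [local instance] Classical.propDecidable

/-! ### Non-crossing partitions of `{1,…,n}`, modelled as setoids on `Fin n` -/

/-- The partition `0_n` of `Fin n` into singletons. -/
def botS (n : ℕ) : Setoid (Fin n) := ⟨Eq, eq_equivalence⟩

/-- The partition `1_n` of `Fin n` with a single block. -/
def topS (n : ℕ) : Setoid (Fin n) :=
  ⟨fun _ _ => True, ⟨fun _ => trivial, fun _ => trivial, fun _ _ => trivial⟩⟩

/-- A partition is non-crossing if there is no crossing `a < b < c < d` with
`a ∼ c`, `b ∼ d` lying in different blocks. -/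
def IsNC {n : ℕ} (s : Setoid (Fin n)) : Prop :=
  ∀ a b c d : Fin n, a < b → b < c → c < d → s.r a c → s.r b d → s.r a b

/-- The lattice `NC(n)` of non-crossing partitions, ordered by reversed refinement
(the order inherited from the lattice of setoids). -/
abbrev NC (n : ℕ) := {s : Setoid (Fin n) // IsNC s}

instance (n : ℕ) : Finite (Setoid (Fin n)) :=
  Finite.of_injective (fun s => s.r) (by intro s t h; cases s; cases t; cases h; rfl)

noncomputable instance (n : ℕ) : Fintype (Setoid (Fin n)) := Fintype.ofFinite _

noncomputable instance (n : ℕ) : Fintype (NC n) := Fintype.ofFinite _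

/-- `0_n` as a non-crossing partition. -/
def ncBot (n : ℕ) : NC n :=
  ⟨botS n, by
    intro a b c d h1 h2 h3 hac _
    have hac' : a = c := hac
    subst hac'
    exact absurd (h1.trans h2) (lt_irrefl _)⟩

/-- `1_n` as a non-crossing partition. -/
def ncTop (n : ℕ) : NC n := ⟨topS n, fun _ _ _ _ _ _ _ _ _ => trivial⟩

/-- The blocks of a partition, as a finset of finsets. -/
def blocks {n : ℕ} (s : Setoid (Fin n)) : Finset (Finset (Fin n)) :=
  Finset.univ.image fun a => Finset.univ.filter fun b => s.r a b

/-- The next element of the block of `b`, in increasing cyclic order. -/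
def nextFun {n : ℕ} (s : Setoid (Fin n)) (b : Fin n) : Fin n :=
  let B : Finset (Fin n) := Finset.univ.filter fun a => s.r b a
  let A : Finset (Fin n) := B.filter fun a => b < a
  if h : A.Nonempty then A.min' h
  else B.min' ⟨b, Finset.mem_filter.mpr ⟨Finset.mem_univ b, s.iseqv.refl b⟩⟩

/-- The permutation `P_π` associated to a partition `π`: its cycles are the blocks
of `π`, traversed in increasing order.  (The function `nextFun` is indeed bijective,
so the `dite` below always takes its first branch.) -/
def permOf {n : ℕ} (s : Setoid (Fin n)) : Equiv.Perm (Fin n) :=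
  if h : Function.Bijective (nextFun s) then Equiv.ofBijective _ h else 1

/-- The partition of `Fin n` into the cycles (orbits) of a permutation. -/
def cycleSetoid {n : ℕ} (σ : Equiv.Perm (Fin n)) : Setoid (Fin n) :=
  ⟨σ.SameCycle, ⟨fun x => Equiv.Perm.SameCycle.refl σ x, fun h => h.symm, fun h h' => h.trans h'⟩⟩

/-- The Kreweras complement `K(π)`, determined by `P_{K(π)} = P_π⁻¹ * P_{1_n}`. -/
def kreweras {n : ℕ} (s : Setoid (Fin n)) : Setoid (Fin n) :=
  cycleSetoid ((permOf s)⁻¹ * permOf (topS n))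

/-- The relative Kreweras complement `K_t(s)`, determined by `P_{K_t(s)} = P_s⁻¹ * P_t`. -/
def relKreweras {n : ℕ} (s t : Setoid (Fin n)) : Setoid (Fin n) :=
  cycleSetoid ((permOf s)⁻¹ * permOf t)

/-! ### Words, and the Hopf algebra `Y^(k)` -/

/-- Words over the alphabet `{1,…,k}`, encoded as pairs `⟨n, w⟩` with `w : Fin n → Fin k`. -/
abbrev WordIdx (k : ℕ) := Σ n : ℕ, Fin n → Fin k

/-- The commutative polynomial algebra `Y^(k) = ℂ[Y_w : |w| ≥ 2]`. -/
abbrev Yalg (k : ℕ) := MvPolynomial {p : WordIdx k // 2 ≤ p.1} ℂ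

/-- The generator `Y_w`, with the convention `Y_w = 1` for `|w| ≤ 1`. -/
def Ygen {k : ℕ} (p : WordIdx k) : Yalg k :=
  if h : 2 ≤ p.1 then MvPolynomial.X ⟨p, h⟩ else 1

/-- The subword `w|B` of `w` on the positions in `B` (in increasing order). -/
def subword {k n : ℕ} (w : Fin n → Fin k) (B : Finset (Fin n)) : Fin B.card → Fin k :=
  fun i => w (B.orderIsoOfFin rfl i).1

/-- The element `Y_{w;π} = ∏_{B block of π} Y_{w|B}`. -/
def Yprod {k n : ℕ} (w : Fin n → Fin k) (s : Setoid (Fin n)) : Yalg k :=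
  ∏ B ∈ blocks s, Ygen ⟨B.card, subword w B⟩

/-- The comultiplication of `Y^(k)`:
`Δ(Y_w) = ∑_{π ∈ NC(n)} Y_{w;π} ⊗ Y_{w;K(π)}`. -/
def Δk (k : ℕ) : Yalg k →ₐ[ℂ] Yalg k ⊗[ℂ] Yalg k :=
  MvPolynomial.aeval fun q : {p : WordIdx k // 2 ≤ p.1} =>
    ∑ π : NC q.1.1, Yprod q.1.2 π.1 ⊗ₜ[ℂ] Yprod q.1.2 (kreweras π.1)

/-- The counit of `Y^(k)`: `ε(Y_w) = 0` for `|w| ≥ 2`. -/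
def εk (k : ℕ) : Yalg k →ₐ[ℂ] ℂ := MvPolynomial.aeval fun _ => 0

/-- The grading of `Y^(k)` in which `Y_w` is homogeneous of degree `|w| - 1`. -/
def Ycomp (k n : ℕ) : Submodule ℂ (Yalg k) :=
  MvPolynomial.weightedHomogeneousSubmodule ℂ (fun q : {p : WordIdx k // 2 ≤ p.1} => q.1.1 - 1) n

/-! ### Convolution of linear functionals on a bialgebra -/

variable {A : Type} [CommRing A] [Algebra ℂ A]

/-- Convolution `ξη := mult ∘ (ξ ⊗ η) ∘ Δ` of two linear functionals. -/
def convF (D : A →ₐ[ℂ] A ⊗[ℂ] A) (ξ η : A →ₗ[ℂ] ℂ) : A →ₗ[ℂ] ℂ :=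
  LinearMap.mul' ℂ ℂ ∘ₗ TensorProduct.map ξ η ∘ₗ D.toLinearMap

/-- Convolution powers `ξ^m`, with `ξ^0 := e` (the counit). -/
def convPowF (D : A →ₐ[ℂ] A ⊗[ℂ] A) (e ξ : A →ₗ[ℂ] ℂ) : ℕ → (A →ₗ[ℂ] ℂ)
  | 0 => e
  | m + 1 => convF D (convPowF D e ξ m) ξ

/-- `(log η)(x) = -∑_{ℓ ≥ 1} (1/ℓ) (e - η)^ℓ (x)`, the logarithm of a functional `η`
with respect to convolution (`e` is the counit).  On each `x` the sum has only finitely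
many nonzero terms, so the `tsum` below is the honest value. -/
def logFunF (D : A →ₐ[ℂ] A ⊗[ℂ] A) (e η : A →ₗ[ℂ] ℂ) (x : A) : ℂ :=
  -∑' ℓ : ℕ, (1 / ((ℓ : ℂ) + 1)) * convPowF D e (e - η) (ℓ + 1) x

/-! ### Distributions, R-transforms, free multiplicative convolution -/

/-- A distribution (or a family of coefficients of a power series in `k` non-commuting
indeterminates), encoded by its values on all words. -/
abbrev Dist (k : ℕ) := WordIdx k → ℂ

/-- `μ ∈ G_k`: `μ(1) = 1` and `μ(X_i) = 1` for all `i`. -/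
def InG {k : ℕ} (μ : Dist k) : Prop :=
  (∀ w : Fin 0 → Fin k, μ ⟨0, w⟩ = 1) ∧ (∀ w : Fin 1 → Fin k, μ ⟨1, w⟩ = 1)

/-- `Cf_{w;π}(f) = ∏_{B block of π} Cf_{w|B}(f)`, for a coefficient family `α`. -/
def cfPart {k n : ℕ} (α : Dist k) (w : Fin n → Fin k) (s : Setoid (Fin n)) : ℂ :=
  ∏ B ∈ blocks s, α ⟨B.card, subword w B⟩

/-- `α` is (the coefficient family of) the R-transform of `μ`:
the moment–cumulant relations hold. -/
def IsRTransform {k : ℕ} (μ α : Dist k) : Prop :=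
  (∀ w : Fin 0 → Fin k, α ⟨0, w⟩ = 0) ∧
  ∀ (n : ℕ) (w : Fin n → Fin k), 1 ≤ n → μ ⟨n, w⟩ = ∑ π : NC n, cfPart α w π.1

/-- `γ` is the R-transform of the free multiplicative convolution of distributions
with R-transforms `α` and `β`:
`Cf_w(R_{μ⊠ν}) = ∑_{π ∈ NC(n)} Cf_{w;π}(R_μ) Cf_{w;K(π)}(R_ν)`. -/
def IsBoxtimes {k : ℕ} (α β γ : Dist k) : Prop :=
  ∀ (n : ℕ) (w : Fin n → Fin k), 1 ≤ n →
    γ ⟨n, w⟩ = ∑ π : NC n, cfPart α w π.1 * cfPart β w (kreweras π.1)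

/-- The unit `μ_o` of `(G_k, ⊠)`: all moments equal to `1`. -/
def distUnit (k : ℕ) : Dist k := fun _ => 1

/-- The character `χ_μ` of `Y^(k)` associated to a distribution with R-transform `α`:
`χ_μ(Y_w) = Cf_w(R_μ)`. -/
def charOf {k : ℕ} (α : Dist k) : Yalg k →ₐ[ℂ] ℂ :=
  MvPolynomial.aeval fun q => α q.1

/-- The generalized coefficient `Cf_w^(Γ)(f) = ∏_{j=1}^{ℓ} Cf_{w;K_{π_j}(π_{j-1})}(f)`
attached to a (multi-)chain `Γ = (π_0,…,π_{m+1})` in `NC(n)`. -/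
def cfChain {k n : ℕ} (α : Dist k) (w : Fin n → Fin k) (m : ℕ)
    (c : Fin (m + 2) → Setoid (Fin n)) : ℂ :=
  ∏ j : Fin (m + 1), cfPart α w (relKreweras (c j.castSucc) (c j.succ))

/-- The `i`-th marginal coefficients: the free cumulants of the `i`-th marginal `μ_i`
are `Cf_{(i,…,i)}(R_μ)`. -/
def margFam {k : ℕ} (α : Dist k) (i : Fin k) : Dist 1 := fun q => α ⟨q.1, fun _ => i⟩


/-! ### Iterated comultiplication -/

/-- The iterated tensor powers `Y^(k) ⊗ ⋯ ⊗ Y^(k)` (`m+1` factors), as objects of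
`ModuleCat ℂ` so that the recursion carries its module structure. -/
def YpowM (k : ℕ) : ℕ → ModuleCat ℂ
  | 0 => ModuleCat.of ℂ (Yalg k)
  | m + 1 => ModuleCat.of ℂ (Yalg k ⊗[ℂ] YpowM k m)

/-- The iterated comultiplication: `Δiter k m = Δ^{m+1}` in the notation of the paper
(`Δiter k 0 = id`, `Δiter k (m+1) = (id ⊗ Δ^{m+1}) ∘ Δ`). -/
def Δiter (k : ℕ) : ∀ m : ℕ, Yalg k →ₗ[ℂ] YpowM k m
  | 0 => LinearMap.id
  | m + 1 => TensorProduct.map LinearMap.id (Δiter k m) ∘ₗ (Δk k).toLinearMap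

/-- The pure tensor `Y_{w;K_{π_1}(π_0)} ⊗ ⋯ ⊗ Y_{w;K_{π_{m+1}}(π_m)}` attached to a
multi-chain `(π_0, …, π_{m+1})`. -/
def chainTensor {k n : ℕ} (w : Fin n → Fin k) :
    ∀ m : ℕ, (Fin (m + 2) → Setoid (Fin n)) → YpowM k m
  | 0, c => Yprod w (relKreweras (c 0) (c 1))
  | m + 1, c => Yprod w (relKreweras (c 0) (c 1)) ⊗ₜ[ℂ] chainTensor w m (fun i => c i.succ)


/-! ### One-variable power series tools -/

/-- The R-transform of a one-variable distribution, as a power series. -/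
def Rser (α : Dist 1) : PowerSeries ℂ :=
  PowerSeries.mk fun m => if m = 0 then 0 else α ⟨m, fun _ => 0⟩

/-- Composition `f ∘ g` of formal power series (the honest composition whenever
`g` has vanishing constant term). -/
def psComp (f g : PowerSeries ℂ) : PowerSeries ℂ :=
  PowerSeries.mk fun m =>
    ∑ j ∈ Finset.range (m + 1), PowerSeries.coeff j f * PowerSeries.coeff m (g ^ j)

/-- `S` is the S-transform of the distribution with R-transform `α`:
`S(z) = (1/z)·R^{⟨-1⟩}(z)`, i.e. `z·S(z)` is the compositional inverse of `R`. -/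
def SChar (α : Dist 1) (S : PowerSeries ℂ) : Prop :=
  PowerSeries.constantCoeff S = 1 ∧
  psComp (Rser α) (PowerSeries.X * S) = PowerSeries.X ∧
  psComp (PowerSeries.X * S) (Rser α) = PowerSeries.X

/-- The formal logarithm `log f = -∑_{ℓ≥1} (1/ℓ)(1-f)^ℓ = ∑_{ℓ≥1} ((-1)^{ℓ+1}/ℓ)(f-1)^ℓ`
of a power series (the honest logarithm whenever `f` has constant term 1). -/
def psLog {B : Type} [CommRing B] [Algebra ℂ B] (f : PowerSeries B) : PowerSeries B :=
  PowerSeries.mk fun m =>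
    ∑ ℓ ∈ Finset.range (m + 1), ((-1 : ℂ) ^ (ℓ + 1) / ℓ) • PowerSeries.coeff m ((f - 1) ^ ℓ)

/-- The coefficient-wise LS-transform of a one-variable distribution, as a power series. -/
def LSseries (α : Dist 1) : PowerSeries ℂ :=
  PowerSeries.mk fun n =>
    if 2 ≤ n then
      logFunF (Δk 1) (εk 1).toLinearMap (charOf α).toLinearMap (Ygen ⟨n, fun _ => 0⟩)
    else 0

/-! ### The Hopf algebra `Sym` of symmetric functions -/

/-- `Sym`, realized as the free commutative algebra on the complete homogeneous
symmetric functions `h_1, h_2, …`. -/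
abbrev SymA := MvPolynomial {m : ℕ // 1 ≤ m} ℂ

/-- The complete homogeneous symmetric function `h_m` (with `h_0 = 1`). -/
def Hgen (m : ℕ) : SymA := if h : 1 ≤ m then MvPolynomial.X ⟨m, h⟩ else 1

/-- The comultiplication of `Sym`: `Δ(h_n) = ∑_{i=0}^n h_i ⊗ h_{n-i}`. -/
def ΔSym : SymA →ₐ[ℂ] SymA ⊗[ℂ] SymA :=
  MvPolynomial.aeval fun q : {m : ℕ // 1 ≤ m} =>
    ∑ i ∈ Finset.range (q.1 + 1), Hgen i ⊗ₜ[ℂ] Hgen (q.1 - i)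

/-- The counit of `Sym`. -/
def εSym : SymA →ₐ[ℂ] ℂ := MvPolynomial.aeval fun _ => 0

/-- The generating series `h(z) = 1 + ∑ (-1)^n h_n z^n`. -/
def hSymSeries : PowerSeries SymA :=
  PowerSeries.mk fun m => if m = 0 then 1 else (-1 : SymA) ^ m * Hgen m

/-- The generating series `e(z) = 1 + ∑ e_n z^n = 1/h(z)`. -/
def eSymSeries : PowerSeries SymA := PowerSeries.invOfUnit hSymSeries 1

/-- The elementary symmetric function `e_m`, defined through `e(z) = 1/h(z)`. -/
def eSym (m : ℕ) : SymA := PowerSeries.coeff m eSymSeries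

/-- The power sum symmetric function `p_m`, defined through
`log e(z) = ∑_{m≥1} ((-1)^{m+1}/m) p_m z^m`. -/
def pSym (m : ℕ) : SymA :=
  ((-1 : ℂ) ^ (m + 1) * m) • PowerSeries.coeff m (psLog eSymSeries)

/-- The grading of `Sym` (`h_n` homogeneous of degree `n`). -/
def SymComp (n : ℕ) : Submodule ℂ SymA :=
  MvPolynomial.weightedHomogeneousSubmodule ℂ (fun q : {m : ℕ // 1 ≤ m} => q.1) n

/-- The symmetric function `y_n = ∑_{π ∈ NC(n-1)} ∏_{B block of π} e_{|B|}`. -/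
def ySym (n : ℕ) : SymA := ∑ π : NC (n - 1), ∏ B ∈ blocks π.1, eSym B.card

/-- The homomorphism `Φ : Y^(1) → Sym`, `Φ(Y_n) = y_n`. -/
def Phi : Yalg 1 →ₐ[ℂ] SymA := MvPolynomial.aeval fun q => ySym q.1.1

/-- The character `θ_μ` of `Sym` attached to a distribution with S-transform `S`:
`θ_μ(h_n) = (-1)^n β_n` where `S(z) = 1 + ∑ β_n z^n`. -/
def thetaOf (S : PowerSeries ℂ) : SymA →ₐ[ℂ] ℂ :=
  MvPolynomial.aeval fun q : {m : ℕ // 1 ≤ m} =>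
    (-1 : ℂ) ^ q.1 * PowerSeries.coeff q.1 S

/-- Infinitesimal characters of `Sym`. -/
def IsInfCharSym (ξ : SymA →ₗ[ℂ] ℂ) : Prop :=
  ∀ u v : SymA, ξ (u * v) = ξ u * εSym v + εSym u * ξ v

/-! ### Helper lemmas -/

section HelperA

open Finset

variable {k n N : ℕ}

lemma nextFun_def (s : Setoid (Fin n)) (b : Fin n) :
    nextFun s b =
      if h : ((Finset.univ.filter fun a => s.r b a).filter fun a => b < a).Nonempty then
        ((Finset.univ.filter fun a => s.r b a).filter fun a => b < a).min' h
      else (Finset.univ.filter fun a => s.r b a).min'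
        ⟨b, Finset.mem_filter.mpr ⟨Finset.mem_univ b, s.iseqv.refl b⟩⟩ := rfl

lemma mem_blocks_iff {s : Setoid (Fin n)} {B : Finset (Fin n)} :
    B ∈ blocks s ↔ ∃ a, B = Finset.univ.filter fun b => s.r a b := by
  simp [blocks, eq_comm]

lemma filter_mem_blocks (s : Setoid (Fin n)) (a : Fin n) :
    (Finset.univ.filter fun b => s.r a b) ∈ blocks s :=
  Finset.mem_image_of_mem _ (Finset.mem_univ a)

lemma nextFun_rel (s : Setoid (Fin n)) (b : Fin n) : s.r b (nextFun s b) := by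
  rw [nextFun_def]
  split_ifs with h
  · have := Finset.min'_mem _ h
    simp only [Finset.mem_filter, Finset.mem_univ, true_and] at this
    exact this.1
  · have := Finset.min'_mem (Finset.univ.filter fun a => s.r b a)
      ⟨b, Finset.mem_filter.mpr ⟨Finset.mem_univ b, s.iseqv.refl b⟩⟩
    simp only [Finset.mem_filter, Finset.mem_univ, true_and] at this
    exact this

lemma nextFun_inj_aux (s : Setoid (Fin n)) {x y : Fin n} (hlt : x < y) (hr : s.r x y)
    (heq : nextFun s x = nextFun s y) : False := by
  have hAx : ((Finset.univ.filter fun a => s.r x a).filter fun a => x < a).Nonempty :=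
    ⟨y, by simp [hr, hlt]⟩
  have hx_lt : x < nextFun s x := by
    rw [nextFun_def, dif_pos hAx]
    have := Finset.min'_mem _ hAx
    simp only [Finset.mem_filter] at this
    exact this.2
  have hx_le : nextFun s x ≤ y := by
    rw [nextFun_def, dif_pos hAx]
    exact Finset.min'_le _ _ (by simp [hr, hlt])
  by_cases hAy : ((Finset.univ.filter fun a => s.r y a).filter fun a => y < a).Nonempty
  · have hy_lt : y < nextFun s y := by
      rw [nextFun_def, dif_pos hAy]
      have := Finset.min'_mem _ hAy
      simp only [Finset.mem_filter] at this
      exact this.2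
    rw [← heq] at hy_lt
    exact absurd hx_le (not_le.mpr hy_lt)
  · have hy_le : nextFun s y ≤ x := by
      rw [nextFun_def, dif_neg hAy]
      exact Finset.min'_le _ _ (by simp [s.iseqv.symm hr])
    rw [← heq] at hy_le
    exact absurd hy_le (not_le.mpr hx_lt)

lemma nextFun_injective (s : Setoid (Fin n)) : Function.Injective (nextFun s) := by
  intro x y heq
  have hr : s.r x y :=
    s.iseqv.trans (nextFun_rel s x) (s.iseqv.symm (heq ▸ nextFun_rel s y))
  rcases lt_trichotomy x y with h | h | h
  · exact absurd heq (fun he => nextFun_inj_aux s h hr he)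
  · exact h
  · exact absurd heq.symm (fun he => nextFun_inj_aux s h (s.iseqv.symm hr) he)

lemma nextFun_bijective (s : Setoid (Fin n)) : Function.Bijective (nextFun s) :=
  Finite.injective_iff_bijective.mp (nextFun_injective s)

lemma permOf_apply (s : Setoid (Fin n)) (x : Fin n) : permOf s x = nextFun s x := by
  rw [permOf, dif_pos (nextFun_bijective s)]
  rfl

lemma permOf_rel (s : Setoid (Fin n)) (x : Fin n) : s.r x (permOf s x) := by
  rw [permOf_apply]; exact nextFun_rel s x

lemma nextFun_top [NeZero n] (x : Fin n) : nextFun (topS n) x = x + 1 := by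
  have hn : 0 < n := Nat.pos_of_ne_zero (NeZero.ne n)
  rw [nextFun_def]
  by_cases h : (x : ℕ) + 1 < n
  · have hmem : (⟨(x : ℕ) + 1, h⟩ : Fin n) ∈
        ((Finset.univ.filter fun a => (topS n).r x a).filter fun a => x < a) := by
      simp only [Finset.mem_filter, Finset.mem_univ, true_and]
      exact ⟨trivial, by rw [Fin.lt_def]; simp⟩
    rw [dif_pos ⟨_, hmem⟩]
    have h1 : x + 1 = (⟨(x : ℕ) + 1, h⟩ : Fin n) := by
      apply Fin.ext
      have e1 : (1 : ℕ) % n = 1 := Nat.mod_eq_of_lt (by omega)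
      simp [Fin.add_def, Fin.val_one', e1, Nat.mod_eq_of_lt h]
    rw [h1]
    apply le_antisymm
    · exact Finset.min'_le _ _ hmem
    · apply Finset.le_min'
      intro z hz
      simp only [Finset.mem_filter, Finset.mem_univ, true_and] at hz
      have hz2 := hz.2
      rw [Fin.lt_def] at hz2
      rw [Fin.le_def]
      simpa using hz2
  · have hlast : (x : ℕ) + 1 = n := by have := x.isLt; omega
    have hempty : ¬ ((Finset.univ.filter fun a => (topS n).r x a).filter
        fun a => x < a).Nonempty := by
      rintro ⟨z, hz⟩
      simp only [Finset.mem_filter, Finset.mem_univ, true_and] at hz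
      have hz2 := hz.2
      rw [Fin.lt_def] at hz2
      have := z.isLt
      omega
    rw [dif_neg hempty]
    have hx10 : x + 1 = 0 := by
      by_cases h1 : n = 1
      · subst h1
        exact Subsingleton.elim _ _
      · apply Fin.ext
        have e1 : (1 : ℕ) % n = 1 := Nat.mod_eq_of_lt (by omega)
        simp [Fin.add_def, Fin.val_one', e1, hlast]
    rw [hx10]
    apply le_antisymm
    · apply Finset.min'_le
      simp only [Finset.mem_filter, Finset.mem_univ, true_and]
      exact trivial
    · exact Fin.zero_le _

lemma permOf_top_apply [NeZero n] (x : Fin n) : permOf (topS n) x = x + 1 := by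
  rw [permOf_apply, nextFun_top]

open Fin.NatCast Fin.CommRing in
lemma permOf_top_pow [NeZero n] (m : ℕ) (x : Fin n) :
    (permOf (topS n) ^ m) x = x + (m : Fin n) := by
  induction m with
  | zero => simp
  | succ m ih =>
    rw [pow_succ', Equiv.Perm.mul_apply, permOf_top_apply, ih]
    have : ((m + 1 : ℕ) : Fin n) = (m : Fin n) + 1 := by push_cast; ring
    rw [this]
    ring

open Fin.NatCast Fin.CommRing in
lemma sameCycle_top [NeZero n] (x y : Fin n) : (permOf (topS n)).SameCycle x y := by
  refine ⟨(((y - x : Fin n) : ℕ) : ℤ), ?_⟩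
  rw [zpow_natCast, permOf_top_pow, Fin.cast_val_eq_self]
  abel

lemma kreweras_top : kreweras (topS n) = botS n := by
  apply Setoid.ext
  intro a b
  show ((permOf (topS n))⁻¹ * permOf (topS n)).SameCycle a b ↔ a = b
  rw [inv_mul_cancel]
  constructor
  · rintro ⟨z, hz⟩
    simpa using hz
  · rintro rfl
    exact ⟨0, by simp⟩

lemma nextFun_bot (x : Fin n) : nextFun (botS n) x = x := by
  rw [nextFun_def]
  have hA : ¬ ((Finset.univ.filter fun a => (botS n).r x a).filter
      fun a => x < a).Nonempty := by
    rintro ⟨z, hz⟩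
    simp only [Finset.mem_filter, Finset.mem_univ, true_and] at hz
    have h1 : x = z := hz.1
    subst h1
    exact absurd hz.2 (lt_irrefl x)
  rw [dif_neg hA]
  apply le_antisymm
  · apply Finset.min'_le
    simp only [Finset.mem_filter, Finset.mem_univ, true_and]
    exact rfl
  · apply Finset.le_min'
    intro z hz
    simp only [Finset.mem_filter, Finset.mem_univ, true_and] at hz
    have h1 : x = z := hz
    exact le_of_eq h1

lemma permOf_bot : permOf (botS n) = 1 := by
  apply Equiv.ext
  intro x
  rw [permOf_apply, nextFun_bot]
  rfl

lemma kreweras_bot [NeZero n] : kreweras (botS n) = topS n := by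
  apply Setoid.ext
  intro a b
  show ((permOf (botS n))⁻¹ * permOf (topS n)).SameCycle a b ↔ True
  rw [permOf_bot, inv_one, one_mul]
  exact ⟨fun _ => trivial, fun _ => sameCycle_top a b⟩

end HelperA
section HelperB

open Finset

variable {k n N : ℕ}

/-- `w` is a mixed word. -/
def Mixd {k n : ℕ} (w : Fin n → Fin k) : Prop := ¬ ∃ i, ∀ j, w j = i

lemma Ygen_eq_one {p : WordIdx k} (h : p.1 < 2) : Ygen p = 1 := dif_neg (by omega)

lemma Ygen_eq_X {p : WordIdx k} (h : 2 ≤ p.1) : Ygen p = MvPolynomial.X ⟨p, h⟩ := dif_pos h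

lemma blocks_card_pos {s : Setoid (Fin n)} {B : Finset (Fin n)} (hB : B ∈ blocks s) :
    0 < B.card := by
  obtain ⟨a, rfl⟩ := mem_blocks_iff.mp hB
  exact Finset.card_pos.mpr ⟨a, Finset.mem_filter.mpr ⟨Finset.mem_univ a, s.iseqv.refl a⟩⟩

lemma Yprod_eq_one {w : Fin n → Fin k} {s : Setoid (Fin n)}
    (h : ∀ x y, s.r x y → x = y) : Yprod w s = 1 := by
  unfold Yprod
  apply Finset.prod_eq_one
  intro B hB
  obtain ⟨a, rfl⟩ := mem_blocks_iff.mp hB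
  have hcard : (Finset.univ.filter fun b => s.r a b).card = 1 := by
    rw [Finset.card_eq_one]
    refine ⟨a, ?_⟩
    ext z
    simp only [Finset.mem_filter, Finset.mem_univ, true_and, Finset.mem_singleton]
    exact ⟨fun hz => (h _ _ hz).symm, fun hz => hz ▸ s.iseqv.refl a⟩
  exact Ygen_eq_one (show (Finset.univ.filter fun b => s.r a b).card < 2 by omega)

lemma setoid_ne_bot {s : Setoid (Fin n)} (h : s ≠ botS n) :
    ∃ x y, s.r x y ∧ x ≠ y := by
  by_contra hc
  push_neg at hc
  apply h
  apply Setoid.ext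
  intro a b
  exact ⟨fun hr => hc a b hr, fun hr => hr ▸ s.iseqv.refl a⟩

lemma eq_top_of_block_univ {s : Setoid (Fin n)} {a : Fin n}
    (h : (Finset.univ.filter fun b => s.r a b) = Finset.univ) : s = topS n := by
  have hall : ∀ x, s.r a x := by
    intro x
    have := Finset.mem_univ x
    rw [← h, Finset.mem_filter] at this
    exact this.2
  apply Setoid.ext
  intro x y
  exact ⟨fun _ => trivial, fun _ => s.iseqv.trans (s.iseqv.symm (hall x)) (hall y)⟩

lemma eq_top_of_blocks_card {s : Setoid (Fin n)} {B : Finset (Fin n)}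
    (hB : B ∈ blocks s) (hc : B.card = n) : s = topS n := by
  obtain ⟨a, rfl⟩ := mem_blocks_iff.mp hB
  exact eq_top_of_block_univ (Finset.eq_univ_of_card _ (by rw [hc, Fintype.card_fin]))

lemma εk_Ygen_of_two_le {p : WordIdx k} (h : 2 ≤ p.1) : εk k (Ygen p) = 0 := by
  rw [Ygen_eq_X h]
  simp [εk]

lemma eps_Yprod_eq_zero {w : Fin n → Fin k} {s : Setoid (Fin n)}
    (h : ∃ x y, s.r x y ∧ x ≠ y) : εk k (Yprod w s) = 0 := by
  obtain ⟨x, y, hr, hne⟩ := h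
  unfold Yprod
  rw [map_prod]
  apply Finset.prod_eq_zero (filter_mem_blocks s x)
  have hcard : 2 ≤ (Finset.univ.filter fun b => s.r x b).card := by
    rw [Nat.succ_le_iff]
    apply Finset.one_lt_card.mpr
    exact ⟨x, Finset.mem_filter.mpr ⟨Finset.mem_univ _, s.iseqv.refl x⟩,
      y, Finset.mem_filter.mpr ⟨Finset.mem_univ _, hr⟩, hne⟩
  exact εk_Ygen_of_two_le hcard

lemma charOf_Ygen {α : Dist k} (hα1 : ∀ v : Fin 1 → Fin k, α ⟨1, v⟩ = 1)
    {p : WordIdx k} (hp : 1 ≤ p.1) : charOf α (Ygen p) = α p := by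
  obtain ⟨m, v⟩ := p
  have hp' : 1 ≤ m := hp
  by_cases h2 : 2 ≤ m
  · rw [Ygen_eq_X h2]
    simp [charOf]
  · have hm1 : m = 1 := by omega
    subst hm1
    rw [Ygen_eq_one (show (1:ℕ) < 2 by omega), map_one, hα1 v]

lemma charOf_Yprod {α : Dist k} (hα1 : ∀ v : Fin 1 → Fin k, α ⟨1, v⟩ = 1)
    (w : Fin n → Fin k) (s : Setoid (Fin n)) :
    charOf α (Yprod w s) = cfPart α w s := by
  unfold Yprod cfPart
  rw [map_prod]
  exact Finset.prod_congr rfl fun B hB => charOf_Ygen hα1 (blocks_card_pos hB)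

lemma wordIdx_ext {m m' : ℕ} (h : m = m') {v : Fin m → Fin k} {v' : Fin m' → Fin k}
    (hv : ∀ j : Fin m, v j = v' (Fin.cast h j)) : (⟨m, v⟩ : WordIdx k) = ⟨m', v'⟩ := by
  subst h
  have : v = v' := funext fun j => hv j
  rw [this]

lemma subword_univ_apply (w : Fin n → Fin k) (j : Fin (Finset.univ : Finset (Fin n)).card) :
    subword w Finset.univ j = w (Fin.cast (Finset.card_fin n) j) := by
  unfold subword
  congr 1
  have hE : ((Finset.univ : Finset (Fin n)).orderIsoOfFin rfl j).1 =
      (((Finset.univ : Finset (Fin n)).orderIsoOfFin rfl).trans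
        ((OrderIso.setCongr _ _ (by simp : ((Finset.univ : Finset (Fin n)) : Set (Fin n)) = Set.univ)).trans
          (OrderIso.Set.univ))) j := rfl
  apply Fin.ext
  rw [hE]
  rw [Fin.coe_orderIso_apply]
  rfl

lemma wordIdx_univ (w : Fin n → Fin k) :
    (⟨(Finset.univ : Finset (Fin n)).card, subword w Finset.univ⟩ : WordIdx k) = ⟨n, w⟩ :=
  wordIdx_ext (Finset.card_fin n) (subword_univ_apply w)

lemma blocks_top (hn : 0 < n) : blocks (topS n) = {Finset.univ} := by
  unfold blocks
  have h1 : (fun a => Finset.univ.filter fun b => (topS n).r a b) =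
      fun _ : Fin n => (Finset.univ : Finset (Fin n)) := by
    funext a
    apply Finset.filter_true_of_mem
    intro _ _
    trivial
  rw [h1]
  haveI : Nonempty (Fin n) := ⟨⟨0, hn⟩⟩
  exact Finset.image_const Finset.univ_nonempty _

lemma cfPart_top {α : Dist k} (hn : 0 < n) (w : Fin n → Fin k) :
    cfPart α w (topS n) = α ⟨n, w⟩ := by
  unfold cfPart
  rw [blocks_top hn, Finset.prod_singleton, wordIdx_univ]

lemma Yprod_top (hn : 0 < n) (w : Fin n → Fin k) : Yprod w (topS n) = Ygen ⟨n, w⟩ := by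
  unfold Yprod
  rw [blocks_top hn, Finset.prod_singleton, wordIdx_univ]

lemma mixd_iff (hk : 0 < k) {B : Finset (Fin n)} {w : Fin n → Fin k} :
    Mixd (subword w B) ↔ ∃ x ∈ B, ∃ y ∈ B, w x ≠ w y := by
  constructor
  · intro h
    by_contra hc
    push_neg at hc
    apply h
    by_cases hB : B.Nonempty
    · obtain ⟨a, ha⟩ := hB
      refine ⟨w a, fun j => ?_⟩
      exact hc _ ((B.orderIsoOfFin rfl) j).2 _ ha
    · have hc0 : B.card = 0 := by
        rw [Finset.card_eq_zero]
        exact Finset.not_nonempty_iff_eq_empty.mp hB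
      exact ⟨⟨0, hk⟩, fun j => absurd j.isLt (by omega)⟩
  · rintro ⟨x, hx, y, hy, hne⟩ ⟨i, hi⟩
    apply hne
    have hwx : w x = i := by
      have := hi ((B.orderIsoOfFin rfl).symm ⟨x, by simpa using hx⟩)
      rwa [show subword w B ((B.orderIsoOfFin rfl).symm ⟨x, by simpa using hx⟩) = w x by
        unfold subword; rw [OrderIso.apply_symm_apply]] at this
    have hwy : w y = i := by
      have := hi ((B.orderIsoOfFin rfl).symm ⟨y, by simpa using hy⟩)
      rwa [show subword w B ((B.orderIsoOfFin rfl).symm ⟨y, by simpa using hy⟩) = w y by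
        unfold subword; rw [OrderIso.apply_symm_apply]] at this
    rw [hwx, hwy]

lemma not_mixd_of_card_le_one (hk : 0 < k) {B : Finset (Fin n)} {w : Fin n → Fin k}
    (hc : B.card ≤ 1) : ¬ Mixd (subword w B) := by
  intro h
  rw [mixd_iff hk] at h
  obtain ⟨x, hx, y, hy, hne⟩ := h
  have hxy : x ≠ y := fun he => hne (he ▸ rfl)
  have : 1 < B.card := Finset.one_lt_card.mpr ⟨x, hx, y, hy, hxy⟩
  omega

lemma two_le_card_of_mixd (hk : 0 < k) {B : Finset (Fin n)} {w : Fin n → Fin k}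
    (h : Mixd (subword w B)) : 2 ≤ B.card := by
  by_contra hc
  exact not_mixd_of_card_le_one hk (by omega) h

lemma const_of_step [NeZero n] {w : Fin n → Fin k} (h : ∀ x : Fin n, w (x + 1) = w x) :
    ∀ j : Fin n, w j = w 0 := by
  have key : ∀ m : ℕ, ∀ hm : m < n, w ⟨m, hm⟩ = w 0 := by
    intro m
    induction m with
    | zero =>
      intro hm
      have h0 : (⟨0, hm⟩ : Fin n) = 0 := Fin.ext (by simp)
      rw [h0]
    | succ m ih =>
      intro hm
      have hmn : m < n := by omega
      have h1 : (⟨m + 1, hm⟩ : Fin n) = (⟨m, hmn⟩ : Fin n) + 1 := by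
        apply Fin.ext
        have e1 : (1 : ℕ) % n = 1 := Nat.mod_eq_of_lt (by omega)
        simp [Fin.add_def, Fin.val_one', e1, Nat.mod_eq_of_lt hm]
      rw [h1, h, ih]
  intro j
  have := key j.1 j.2
  simpa using this

/-- The join lemma: for a mixed word `w` and any partition `s`, either `s` or its
Kreweras complement has a mixed block. -/
lemma mixed_block_of_mixed (hk : 0 < k) {s : Setoid (Fin n)} {w : Fin n → Fin k}
    (hw : Mixd w) :
    (∃ B ∈ blocks s, Mixd (subword w B)) ∨
    (∃ B ∈ blocks (kreweras s), Mixd (subword w B)) := by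
  by_contra hc
  push_neg at hc
  obtain ⟨h1, h2⟩ := hc
  have hconst1 : ∀ x y, s.r x y → w x = w y := by
    intro x y hxy
    have hB := h1 _ (filter_mem_blocks s x)
    rw [mixd_iff hk] at hB
    push_neg at hB
    exact hB x (Finset.mem_filter.mpr ⟨Finset.mem_univ _, s.iseqv.refl x⟩) y
      (Finset.mem_filter.mpr ⟨Finset.mem_univ _, hxy⟩)
  have hconst2 : ∀ x y, (kreweras s).r x y → w x = w y := by
    intro x y hxy
    have hB := h2 _ (filter_mem_blocks (kreweras s) x)
    rw [mixd_iff hk] at hB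
    push_neg at hB
    exact hB x (Finset.mem_filter.mpr ⟨Finset.mem_univ _, (kreweras s).iseqv.refl x⟩) y
      (Finset.mem_filter.mpr ⟨Finset.mem_univ _, hxy⟩)
  have hn : 0 < n := by
    rcases Nat.eq_zero_or_pos n with h | h
    · subst h
      exact absurd ⟨⟨0, hk⟩, fun j => j.elim0⟩ hw
    · exact h
  haveI : NeZero n := ⟨hn.ne'⟩
  have step : ∀ x : Fin n, w (x + 1) = w x := by
    intro x
    set σ := permOf s with hσ
    set τ := σ⁻¹ * permOf (topS n) with hτ
    have e1 : w (τ x) = w x :=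
      (hconst2 x (τ x) ⟨1, by rw [zpow_one]⟩).symm
    have e2 : w (σ (τ x)) = w (τ x) := (hconst1 _ _ (permOf_rel s (τ x))).symm
    have e3 : σ (τ x) = x + 1 := by
      rw [hτ, Equiv.Perm.mul_apply, Equiv.Perm.inv_def, Equiv.apply_symm_apply, permOf_top_apply]
    rw [← e3, e2, e1]
  apply hw
  exact ⟨w 0, const_of_step step⟩

end HelperB
section HelperC

open Finset

variable {k n N : ℕ}

/-- For a non-crossing partition `s` which is not the singleton partition, the
Kreweras complement is not the one-block partition. -/
lemma kreweras_not_top {s : Setoid (Fin n)} (hs : IsNC s) {x y : Fin n}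
    (hr0 : s.r x y) (hxy0 : x ≠ y) : ∃ a b : Fin n, ¬ (kreweras s).r a b := by
  haveI : NeZero n := ⟨by rintro rfl; exact x.elim0⟩
  obtain ⟨a, b0, hab, hrab⟩ : ∃ a b0 : Fin n, a < b0 ∧ s.r a b0 := by
    rcases lt_or_gt_of_ne hxy0 with h | h
    · exact ⟨x, y, h, hr0⟩
    · exact ⟨y, x, h, s.iseqv.symm hr0⟩
  set T := Finset.univ.filter (fun z => a < z ∧ s.r a z) with hT
  have hTne : T.Nonempty := ⟨b0, by simp [hT, hab, hrab]⟩
  set b := T.min' hTne with hbdef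
  have hbT : b ∈ T := Finset.min'_mem _ _
  have hab' : a < b := by
    have := hbT; simp only [hT, Finset.mem_filter, Finset.mem_univ, true_and] at this
    exact this.1
  have hrab' : s.r a b := by
    have := hbT; simp only [hT, Finset.mem_filter, Finset.mem_univ, true_and] at this
    exact this.2
  have hmin : ∀ z, a < z → z < b → ¬ s.r a z := by
    intro z h1 h2 hrz
    have : b ≤ z := Finset.min'_le _ _ (by simp [hT, h1, hrz])
    exact absurd h2 (not_lt.mpr this)
  set σ := permOf s with hσ
  set τ := σ⁻¹ * permOf (topS n) with hτ
  have hInv : ∀ u : Fin n, a ≤ u → u < b → a ≤ τ u ∧ τ u < b := by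
    intro u hau hub
    have hu1lt : (u : ℕ) + 1 < n := by
      have h1 : (b : ℕ) < n := b.isLt
      have h2 : (u : ℕ) < (b : ℕ) := hub
      omega
    have hadd : ((u + 1 : Fin n) : ℕ) = (u : ℕ) + 1 := by
      have e1 : (1 : ℕ) % n = 1 := Nat.mod_eq_of_lt (by omega)
      simp [Fin.add_def, Fin.val_one', e1, Nat.mod_eq_of_lt hu1lt]
    have hτu : σ (τ u) = u + 1 := by
      rw [hτ, Equiv.Perm.mul_apply, Equiv.Perm.inv_def, Equiv.apply_symm_apply, permOf_top_apply]
    have hrel : s.r (τ u) (u + 1) := by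
      have := permOf_rel s (τ u)
      rwa [show permOf s (τ u) = u + 1 from hτu] at this
    have haub : a < u + 1 := by
      rw [Fin.lt_def, hadd]
      have := Fin.le_def.mp hau
      omega
    have hub1 : u + 1 ≤ b := by
      rw [Fin.le_def, hadd]
      have := Fin.lt_def.mp hub
      omega
    by_cases hcase : u + 1 = b
    · have hA : ((Finset.univ.filter fun c => s.r a c).filter fun c => a < c).Nonempty :=
        ⟨b, by simp [hrab', hab']⟩
      have hnfa : nextFun s a = b := by
        rw [nextFun_def, dif_pos hA]
        apply le_antisymm
        · exact Finset.min'_le _ _ (by simp [hrab', hab'])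
        · apply Finset.le_min'
          intro z hz
          simp only [Finset.mem_filter, Finset.mem_univ, true_and] at hz
          by_contra hlt
          push_neg at hlt
          exact hmin z hz.2 hlt hz.1
      have hσa : σ a = σ (τ u) := by
        rw [hτu, hcase, hσ, permOf_apply, hnfa]
      have hτua : τ u = a := (σ.injective hσa).symm
      rw [hτua]
      exact ⟨le_refl a, hab'⟩
    · have hu1b : u + 1 < b := lt_of_le_of_ne hub1 hcase
      have hnotr : ¬ s.r a (u + 1) := hmin _ haub hu1b
      have hva : a < τ u := by
        rcases lt_trichotomy (τ u) a with h | h | h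
        · have hcross := hs (τ u) a (u + 1) b h haub hu1b hrel hrab'
          exact absurd (s.iseqv.trans (s.iseqv.symm hcross) hrel) hnotr
        · rw [h] at hrel
          exact absurd hrel hnotr
        · exact h
      have hvb : τ u < b := by
        rcases lt_trichotomy (τ u) b with h | h | h
        · exact h
        · rw [h] at hrel
          exact absurd (s.iseqv.trans hrab' hrel) hnotr
        · have hcross := hs a (u + 1) b (τ u) haub hu1b h hrab' (s.iseqv.symm hrel)
          exact absurd hcross hnotr
      exact ⟨le_of_lt hva, hvb⟩
  set J := Finset.Ico a b with hJ
  have hτJ : ∀ u ∈ J, τ u ∈ J := by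
    intro u hu
    rw [hJ, Finset.mem_Ico] at hu ⊢
    exact hInv u hu.1 hu.2
  have himg : J.image τ = J := by
    apply Finset.eq_of_subset_of_card_le
    · intro v hv
      rw [Finset.mem_image] at hv
      obtain ⟨u, hu, rfl⟩ := hv
      exact hτJ u hu
    · rw [Finset.card_image_of_injective _ τ.injective]
  have hτinvJ : ∀ u ∈ J, τ⁻¹ u ∈ J := by
    intro u hu
    rw [← himg, Finset.mem_image] at hu
    obtain ⟨v, hv, hveq⟩ := hu
    have : τ⁻¹ u = v := by rw [← hveq, Equiv.Perm.inv_def, Equiv.symm_apply_apply]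
    rw [this]
    exact hv
  have hzmem : ∀ z : ℤ, (τ ^ z) a ∈ J := by
    intro z
    induction z using Int.induction_on with
    | zero =>
      simp only [zpow_zero, Equiv.Perm.coe_one, id_eq]
      rw [hJ, Finset.mem_Ico]
      exact ⟨le_refl a, hab'⟩
    | succ i ih =>
      have hstep : (τ ^ ((i : ℤ) + 1)) a = τ ((τ ^ (i : ℤ)) a) := by
        rw [show (i : ℤ) + 1 = 1 + i by ring, zpow_one_add]
        rfl
      rw [hstep]
      exact hτJ _ ih
    | pred i ih =>
      have hstep : (τ ^ (-(i : ℤ) - 1)) a = τ⁻¹ ((τ ^ (-(i : ℤ))) a) := by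
        apply τ.injective
        rw [Equiv.Perm.inv_def, Equiv.apply_symm_apply, ← Equiv.Perm.mul_apply, ← zpow_one_add]
        norm_num
      rw [hstep]
      exact hτinvJ _ ih
  refine ⟨a, b, ?_⟩
  intro hcon
  obtain ⟨z, hzeq⟩ := hcon
  have := hzmem z
  rw [hzeq, hJ, Finset.mem_Ico] at this
  exact absurd this.2 (lt_irrefl b)

end HelperC
section HelperD

open Finset

variable {k n N : ℕ}

lemma convF_eval {A : Type} [CommRing A] [Algebra ℂ A] (D : A →ₐ[ℂ] A ⊗[ℂ] A)
    (ξ η : A →ₗ[ℂ] ℂ) {x : A} {ι : Type*} {s : Finset ι} {f g : ι → A}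
    (hx : D x = ∑ i ∈ s, f i ⊗ₜ[ℂ] g i) :
    convF D ξ η x = ∑ i ∈ s, ξ (f i) * η (g i) := by
  unfold convF
  rw [LinearMap.comp_apply, LinearMap.comp_apply, AlgHom.toLinearMap_apply, hx,
    map_sum, map_sum]
  exact Finset.sum_congr rfl fun i _ => by
    rw [TensorProduct.map_tmul, LinearMap.mul'_apply]

lemma Δk_Ygen (hn : 2 ≤ n) (w : Fin n → Fin k) :
    Δk k (Ygen ⟨n, w⟩) =
      ∑ π : NC n, Yprod w π.1 ⊗ₜ[ℂ] Yprod w (kreweras π.1) := by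
  rw [Ygen_eq_X hn]
  unfold Δk
  rw [MvPolynomial.aeval_X]

lemma convPow_one_succ {α : Dist k} (m : ℕ) :
    convPowF (Δk k) (εk k).toLinearMap
      ((εk k).toLinearMap - (charOf α).toLinearMap) (m + 1) (1 : Yalg k) = 0 := by
  show convF _ _ _ (1 : Yalg k) = 0
  have h1 : Δk k (1 : Yalg k) = ∑ i ∈ ({0} : Finset ℕ),
      (1 : Yalg k) ⊗ₜ[ℂ] (1 : Yalg k) := by
    rw [map_one, Finset.sum_singleton, Algebra.TensorProduct.one_def]
  rw [convF_eval _ _ _ h1, Finset.sum_singleton]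
  have : ((εk k).toLinearMap - (charOf α).toLinearMap) (1 : Yalg k) = 0 := by
    rw [LinearMap.sub_apply, AlgHom.toLinearMap_apply, AlgHom.toLinearMap_apply,
      map_one, map_one, sub_self]
  rw [this, mul_zero]

end HelperD

section HelperE

open Finset

variable {k n N : ℕ}

/-- Generators: `X_w` for mixed words `w` of length `< N`. -/
def mixedGens (k N : ℕ) : Set (Yalg k) :=
  {x | ∃ (m : ℕ) (w : Fin m → Fin k) (h2 : 2 ≤ m),
    Mixd w ∧ m < N ∧ x = MvPolynomial.X ⟨⟨m, w⟩, h2⟩}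

/-- The ideal generated by mixed generators of length `< N`. -/
def Imix (k N : ℕ) : Ideal (Yalg k) := Ideal.span (mixedGens k N)

/-- The corresponding "coideal" in the tensor square. -/
def Jmix (k N : ℕ) : Ideal (Yalg k ⊗[ℂ] Yalg k) :=
  Ideal.map (Algebra.TensorProduct.includeLeftRingHom :
    Yalg k →+* Yalg k ⊗[ℂ] Yalg k) (Imix k N) ⊔
  Ideal.map (Algebra.TensorProduct.includeRight :
    Yalg k →ₐ[ℂ] Yalg k ⊗[ℂ] Yalg k).toRingHom (Imix k N)

lemma Yprod_mem_Imix (hk : 0 < k) {s : Setoid (Fin n)} {w : Fin n → Fin k}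
    {B : Finset (Fin n)} (hB : B ∈ blocks s) (hmix : Mixd (subword w B))
    (hcN : B.card < N) : Yprod w s ∈ Imix k N := by
  have h2 : 2 ≤ B.card := two_le_card_of_mixd hk hmix
  unfold Yprod
  rw [← Finset.mul_prod_erase _ _ hB]
  apply Ideal.mul_mem_right
  apply Ideal.subset_span
  rw [Ygen_eq_X h2]
  exact ⟨B.card, subword w B, h2, hmix, hcN, rfl⟩

lemma vanish_on_Imix {f : Yalg k →ₐ[ℂ] ℂ} (hf : ∀ x ∈ mixedGens k N, f x = 0) :
    ∀ x ∈ Imix k N, f x = 0 := by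
  intro x hx
  have hle : Imix k N ≤ RingHom.ker f.toRingHom := Ideal.span_le.mpr fun y hy => hf y hy
  exact hle hx

lemma eps_vanish_Imix : ∀ x ∈ Imix k N, εk k x = 0 := by
  apply vanish_on_Imix
  rintro x ⟨m, w, h2, hmix, hN, rfl⟩
  simp [εk]

lemma chi_vanish_Imix {α : Dist k}
    (Hyp : ∀ (m : ℕ) (w : Fin m → Fin k), 2 ≤ m → Mixd w → m < N → α ⟨m, w⟩ = 0) :
    ∀ x ∈ Imix k N, charOf α x = 0 := by
  apply vanish_on_Imix
  rintro x ⟨m, w, h2, hmix, hN, rfl⟩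
  have : charOf α (MvPolynomial.X (⟨⟨m, w⟩, h2⟩ : {p : WordIdx k // 2 ≤ p.1}))
      = α ⟨m, w⟩ := by simp [charOf]
  rw [this]
  exact Hyp m w h2 hmix hN

lemma Delta_mem_Jmix (hk : 0 < k) {x : Yalg k} (hx : x ∈ Imix k N) :
    Δk k x ∈ Jmix k N := by
  refine Submodule.span_induction ?_ ?_ ?_ ?_ hx
  · rintro y ⟨m, w, h2, hmix, hN, rfl⟩
    rw [← Ygen_eq_X h2, Δk_Ygen h2]
    apply Ideal.sum_mem
    intro π _
    rcases mixed_block_of_mixed hk (s := π.1) hmix with ⟨B, hB, hBmix⟩ | ⟨B, hB, hBmix⟩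
    · have h1 : Yprod w π.1 ∈ Imix k N := Yprod_mem_Imix hk hB hBmix
        (by have := Finset.card_le_univ B; rw [Fintype.card_fin] at this; omega)
      have heq : Yprod w π.1 ⊗ₜ[ℂ] Yprod w (kreweras π.1) =
          (Algebra.TensorProduct.includeLeftRingHom (Yprod w π.1)) *
            ((1 : Yalg k) ⊗ₜ[ℂ] Yprod w (kreweras π.1)) := by
        rw [Algebra.TensorProduct.includeLeftRingHom_apply,
          Algebra.TensorProduct.tmul_mul_tmul, mul_one, one_mul]
      rw [heq]
      exact Ideal.mul_mem_right _ _
        (Ideal.mem_sup_left (Ideal.mem_map_of_mem _ h1))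
    · have h1 : Yprod w (kreweras π.1) ∈ Imix k N := Yprod_mem_Imix hk hB hBmix
        (by have := Finset.card_le_univ B; rw [Fintype.card_fin] at this; omega)
      have heq : Yprod w π.1 ⊗ₜ[ℂ] Yprod w (kreweras π.1) =
          (Yprod w π.1 ⊗ₜ[ℂ] (1 : Yalg k)) *
            ((Algebra.TensorProduct.includeRight :
              Yalg k →ₐ[ℂ] Yalg k ⊗[ℂ] Yalg k) (Yprod w (kreweras π.1))) := by
        rw [Algebra.TensorProduct.includeRight_apply,
          Algebra.TensorProduct.tmul_mul_tmul, mul_one, one_mul]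
      rw [heq]
      exact Ideal.mul_mem_left _ _
        (Ideal.mem_sup_right (Ideal.mem_map_of_mem _ h1))
  · rw [map_zero]
    exact Ideal.zero_mem _
  · intro y z _ _ hy hz
    rw [map_add]
    exact Ideal.add_mem _ hy hz
  · intro c y _ hy
    rw [smul_eq_mul, map_mul]
    exact Ideal.mul_mem_left _ _ hy

set_option synthInstance.maxHeartbeats 1000000 in
lemma F_vanish_Jmix {P ξ : Yalg k →ₗ[ℂ] ℂ}
    (hP : ∀ a ∈ Imix k N, P a = 0) (hξ : ∀ a ∈ Imix k N, ξ a = 0) :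
    ∀ t ∈ Jmix k N, LinearMap.mul' ℂ ℂ (TensorProduct.map P ξ t) = 0 := by
  set F : (Yalg k ⊗[ℂ] Yalg k) →ₗ[ℂ] ℂ :=
    LinearMap.mul' ℂ ℂ ∘ₗ TensorProduct.map P ξ with hF
  have hFtmul : ∀ u v : Yalg k, F (u ⊗ₜ[ℂ] v) = P u * ξ v := fun u v => by
    rw [hF, LinearMap.comp_apply, TensorProduct.map_tmul, LinearMap.mul'_apply]
  have hleft : ∀ t ∈ Ideal.map (Algebra.TensorProduct.includeLeftRingHom :
      Yalg k →+* Yalg k ⊗[ℂ] Yalg k) (Imix k N),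
      ∀ c : Yalg k ⊗[ℂ] Yalg k, F (c * t) = 0 := by
    intro t ht
    refine Submodule.span_induction ?_ ?_ ?_ ?_ ht
    · rintro y ⟨a, ha, rfl⟩ c
      rw [Algebra.TensorProduct.includeLeftRingHom_apply]
      induction c using TensorProduct.induction_on with
      | zero => rw [zero_mul, map_zero]
      | tmul u v =>
        rw [Algebra.TensorProduct.tmul_mul_tmul, mul_one, hFtmul,
          hP (u * a) (Ideal.mul_mem_left _ u ha), zero_mul]
      | add c1 c2 h1 h2 => rw [add_mul, map_add, h1, h2, add_zero]
    · intro c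
      rw [mul_zero, map_zero]
    · intro y z _ _ hy hz c
      rw [mul_add, map_add, hy c, hz c, add_zero]
    · intro a y _ hy c
      rw [smul_eq_mul, ← mul_assoc]
      exact hy (c * a)
  have hright : ∀ t ∈ Ideal.map (Algebra.TensorProduct.includeRight :
      Yalg k →ₐ[ℂ] Yalg k ⊗[ℂ] Yalg k).toRingHom (Imix k N),
      ∀ c : Yalg k ⊗[ℂ] Yalg k, F (c * t) = 0 := by
    intro t ht
    refine Submodule.span_induction ?_ ?_ ?_ ?_ ht
    · rintro y ⟨a, ha, rfl⟩ c
      have hra : (Algebra.TensorProduct.includeRight :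
          Yalg k →ₐ[ℂ] Yalg k ⊗[ℂ] Yalg k).toRingHom a = (1 : Yalg k) ⊗ₜ[ℂ] a := rfl
      rw [hra]
      induction c using TensorProduct.induction_on with
      | zero => rw [zero_mul, map_zero]
      | tmul u v =>
        rw [Algebra.TensorProduct.tmul_mul_tmul, mul_one, hFtmul,
          hξ (v * a) (Ideal.mul_mem_left _ v ha), mul_zero]
      | add c1 c2 h1 h2 => rw [add_mul, map_add, h1, h2, add_zero]
    · intro c
      rw [mul_zero, map_zero]
    · intro y z _ _ hy hz c
      rw [mul_add, map_add, hy c, hz c, add_zero]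
    · intro a y _ hy c
      rw [smul_eq_mul, ← mul_assoc]
      exact hy (c * a)
  intro t ht
  rw [Jmix, Submodule.mem_sup] at ht
  obtain ⟨t1, ht1, t2, ht2, rfl⟩ := ht
  have e1 := hleft t1 ht1 1
  have e2 := hright t2 ht2 1
  rw [one_mul] at e1 e2
  show F (t1 + t2) = 0
  rw [map_add, e1, e2, add_zero]

lemma Pm_vanish_Imix (hk : 0 < k) {α : Dist k}
    (Hyp : ∀ (m : ℕ) (w : Fin m → Fin k), 2 ≤ m → Mixd w → m < N → α ⟨m, w⟩ = 0) :
    ∀ (m : ℕ), ∀ x ∈ Imix k N,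
      convPowF (Δk k) (εk k).toLinearMap
        ((εk k).toLinearMap - (charOf α).toLinearMap) m x = 0 := by
  have hξ : ∀ a ∈ Imix k N, ((εk k).toLinearMap - (charOf α).toLinearMap) a = 0 := by
    intro a ha
    rw [LinearMap.sub_apply, AlgHom.toLinearMap_apply, AlgHom.toLinearMap_apply,
      eps_vanish_Imix a ha, chi_vanish_Imix Hyp a ha, sub_zero]
  intro m
  induction m with
  | zero =>
    intro x hx
    show (εk k).toLinearMap x = 0
    rw [AlgHom.toLinearMap_apply]
    exact eps_vanish_Imix x hx
  | succ m ih =>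
    intro x hx
    show convF _ _ _ x = 0
    unfold convF
    rw [LinearMap.comp_apply, LinearMap.comp_apply, AlgHom.toLinearMap_apply]
    exact F_vanish_Jmix ih hξ _ (Delta_mem_Jmix hk hx)

end HelperE
section HelperF

open Finset

variable {k n N : ℕ}

lemma alpha_one {μ α : Dist k} (hμ : InG μ) (hα : IsRTransform μ α) :
    ∀ v : Fin 1 → Fin k, α ⟨1, v⟩ = 1 := by
  intro v
  have h1 := hα.2 1 v le_rfl
  rw [hμ.2 v] at h1
  haveI hsub : Subsingleton (Setoid (Fin 1)) := ⟨by
    intro s t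
    apply Setoid.ext
    intro a b
    have hab : a = b := Subsingleton.elim a b
    subst hab
    exact ⟨fun _ => t.iseqv.refl a, fun _ => s.iseqv.refl a⟩⟩
  haveI : Unique (NC 1) := ⟨⟨ncBot 1⟩, fun a => Subtype.ext (Subsingleton.elim _ _)⟩
  rw [Fintype.sum_unique] at h1
  have hd : (default : NC 1).1 = topS 1 := Subsingleton.elim _ _
  rw [hd, cfPart_top one_pos] at h1
  exact h1.symm

lemma P1_Ygen {α : Dist k} (hα1 : ∀ v : Fin 1 → Fin k, α ⟨1, v⟩ = 1)
    (hn : 2 ≤ n) (w : Fin n → Fin k) :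
    convPowF (Δk k) (εk k).toLinearMap
      ((εk k).toLinearMap - (charOf α).toLinearMap) 1 (Ygen ⟨n, w⟩) = -α ⟨n, w⟩ := by
  haveI : NeZero n := ⟨by omega⟩
  show convF _ _ _ _ = _
  rw [convF_eval _ _ _ (Δk_Ygen hn w)]
  rw [Finset.sum_eq_single (ncBot n)]
  · have h1 : Yprod w (ncBot n).1 = 1 := Yprod_eq_one fun x y h => h
    have h2 : kreweras (ncBot n).1 = topS n := kreweras_bot
    have h0 : convPowF (Δk k) (εk k).toLinearMap
        ((εk k).toLinearMap - (charOf α).toLinearMap) 0 = (εk k).toLinearMap := rfl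
    rw [h1, h2, Yprod_top (by omega) w, h0]
    rw [AlgHom.toLinearMap_apply, map_one, one_mul, LinearMap.sub_apply,
      AlgHom.toLinearMap_apply, AlgHom.toLinearMap_apply,
      εk_Ygen_of_two_le hn, charOf_Ygen hα1 (show (1:ℕ) ≤ n by omega), zero_sub]
  · intro π _ hπ
    have hπ1 : π.1 ≠ botS n := fun h => hπ (Subtype.ext h)
    have hε : εk k (Yprod w π.1) = 0 := eps_Yprod_eq_zero (setoid_ne_bot hπ1)
    have h0 : convPowF (Δk k) (εk k).toLinearMap
        ((εk k).toLinearMap - (charOf α).toLinearMap) 0 = (εk k).toLinearMap := rfl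
    rw [h0, AlgHom.toLinearMap_apply, hε, zero_mul]
  · intro h
    exact absurd (Finset.mem_univ _) h

/-- Key computation 1: under vanishing of all mixed cumulants, the mixed
log-coefficients vanish. -/
lemma L_mixed_eq_zero (hk : 0 < k) {α : Dist k}
    (H1 : ∀ (m : ℕ) (w : Fin m → Fin k), 2 ≤ m → Mixd w → α ⟨m, w⟩ = 0)
    (hn : 2 ≤ n) {w : Fin n → Fin k} (hw : Mixd w) :
    logFunF (Δk k) (εk k).toLinearMap (charOf α).toLinearMap (Ygen ⟨n, w⟩) = 0 := by
  have hmem : Ygen ⟨n, w⟩ ∈ Imix k (n + 1) := by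
    rw [Ygen_eq_X hn]
    exact Ideal.subset_span ⟨n, w, hn, hw, by omega, rfl⟩
  have hP := Pm_vanish_Imix (N := n + 1) hk fun m v h2 hm _ => H1 m v h2 hm
  unfold logFunF
  have hterm : ∀ ℓ : ℕ, (1 / ((ℓ : ℂ) + 1)) *
      convPowF (Δk k) (εk k).toLinearMap
        ((εk k).toLinearMap - (charOf α).toLinearMap) (ℓ + 1) (Ygen ⟨n, w⟩) = 0 :=
    fun ℓ => by rw [hP (ℓ + 1) _ hmem, mul_zero]
  rw [tsum_congr hterm, tsum_zero, neg_zero]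

/-- Key computation 2: the higher convolution powers vanish on mixed generators,
assuming mixed cumulants of lower order vanish. -/
lemma P_succ_succ_zero (hk : 0 < k) {α : Dist k}
    (hα1 : ∀ v : Fin 1 → Fin k, α ⟨1, v⟩ = 1)
    (hn : 2 ≤ n) {w : Fin n → Fin k} (hw : Mixd w)
    (IH : ∀ (m : ℕ) (v : Fin m → Fin k), 2 ≤ m → Mixd v → m < n → α ⟨m, v⟩ = 0)
    (ℓ : ℕ) :
    convPowF (Δk k) (εk k).toLinearMap
      ((εk k).toLinearMap - (charOf α).toLinearMap) (ℓ + 2) (Ygen ⟨n, w⟩) = 0 := by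
  haveI : NeZero n := ⟨by omega⟩
  show convF _ _ _ _ = 0
  rw [convF_eval _ _ _ (Δk_Ygen hn w)]
  apply Finset.sum_eq_zero
  intro π _
  by_cases hbot : π.1 = botS n
  · rw [show Yprod w π.1 = 1 by rw [hbot]; exact Yprod_eq_one fun x y h => h,
      convPow_one_succ, zero_mul]
  by_cases htop : π.1 = topS n
  · have hkb : kreweras π.1 = botS n := by rw [htop]; exact kreweras_top
    rw [show Yprod w (kreweras π.1) = 1 by
      rw [hkb]; exact Yprod_eq_one fun x y h => h]
    have : ((εk k).toLinearMap - (charOf α).toLinearMap) (1 : Yalg k) = 0 := by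
      rw [LinearMap.sub_apply, AlgHom.toLinearMap_apply, AlgHom.toLinearMap_apply,
        map_one, map_one, sub_self]
    rw [this, mul_zero]
  rcases mixed_block_of_mixed hk (s := π.1) hw with ⟨B, hB, hBmix⟩ | ⟨B, hB, hBmix⟩
  · have hcard : B.card < n := by
      have hle : B.card ≤ n := by
        have := Finset.card_le_univ B
        rwa [Fintype.card_fin] at this
      rcases eq_or_lt_of_le hle with he | hlt
      · exact absurd (eq_top_of_blocks_card hB he) htop
      · exact hlt
    have hmem : Yprod w π.1 ∈ Imix k n := Yprod_mem_Imix (N := n) hk hB hBmix hcard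
    rw [Pm_vanish_Imix (N := n) hk (fun m v h2 hm hlt => IH m v h2 hm hlt)
      (ℓ + 1) _ hmem, zero_mul]
  · have h2B : 2 ≤ B.card := two_le_card_of_mixd hk hBmix
    have hcard : B.card < n := by
      have hle : B.card ≤ n := by
        have := Finset.card_le_univ B
        rwa [Fintype.card_fin] at this
      rcases eq_or_lt_of_le hle with he | hlt
      · exfalso
        have hKtop : kreweras π.1 = topS n := eq_top_of_blocks_card hB he
        obtain ⟨x, y, hr, hxy⟩ := setoid_ne_bot hbot
        obtain ⟨a, b, hnr⟩ := kreweras_not_top π.2 hr hxy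
        rw [hKtop] at hnr
        exact hnr trivial
      · exact hlt
    have hrelpair : ∃ x y, (kreweras π.1).r x y ∧ x ≠ y := by
      obtain ⟨a, haB⟩ := mem_blocks_iff.mp hB
      rw [mixd_iff hk] at hBmix
      obtain ⟨x, hx, y, hy, hne⟩ := hBmix
      rw [haB, Finset.mem_filter] at hx hy
      refine ⟨x, y, (kreweras π.1).iseqv.trans ((kreweras π.1).iseqv.symm hx.2) hy.2,
        fun he => hne (he ▸ rfl)⟩
    have hε : εk k (Yprod w (kreweras π.1)) = 0 := eps_Yprod_eq_zero hrelpair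
    have hχ : charOf α (Yprod w (kreweras π.1)) = 0 := by
      rw [charOf_Yprod hα1]
      unfold cfPart
      apply Finset.prod_eq_zero hB
      exact IH _ _ h2B hBmix hcard
    have hξ0 : ((εk k).toLinearMap - (charOf α).toLinearMap)
        (Yprod w (kreweras π.1)) = 0 := by
      rw [LinearMap.sub_apply, AlgHom.toLinearMap_apply, AlgHom.toLinearMap_apply,
        hε, hχ, sub_zero]
    rw [hξ0, mul_zero]

/-- Key computation 2 (conclusion): mixed log-coefficients vanishing implies mixed
cumulants vanish. -/
lemma mixed_cumulant_vanish (hk : 0 < k) {μ α : Dist k} (hμ : InG μ)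
    (hα : IsRTransform μ α)
    (HM : ∀ (n : ℕ) (w : Fin n → Fin k), 2 ≤ n → Mixd w →
      logFunF (Δk k) (εk k).toLinearMap (charOf α).toLinearMap (Ygen ⟨n, w⟩) = 0) :
    ∀ (n : ℕ) (w : Fin n → Fin k), 2 ≤ n → Mixd w → α ⟨n, w⟩ = 0 := by
  have hα1 := alpha_one hμ hα
  intro n
  induction n using Nat.strong_induction_on with
  | _ n IH =>
    intro w hn hw
    have hL := HM n w hn hw
    unfold logFunF at hL
    rw [tsum_eq_single 0 ?side] at hL
    case side =>
      intro ℓ hℓ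
      obtain ⟨ℓ', rfl⟩ := Nat.exists_eq_succ_of_ne_zero hℓ
      rw [P_succ_succ_zero hk hα1 hn hw (fun m v h2 hm hlt => IH m hlt v h2 hm) ℓ',
        mul_zero]
    rw [P1_Ygen hα1 hn w] at hL
    push_cast at hL
    simp at hL
    exact hL

end HelperF
section HelperG

open Finset

variable {k n N : ℕ}

/-- The embedding `Y^(1) → Y^(k)` sending `Y_v` to `Y_{(i,…,i)}`. -/
def iotaM (k : ℕ) (i : Fin k) : Yalg 1 →ₐ[ℂ] Yalg k :=
  MvPolynomial.aeval fun q : {p : WordIdx 1 // 2 ≤ p.1} => Ygen ⟨q.1.1, fun _ => i⟩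

lemma iota_Ygen (i : Fin k) (m : ℕ) (v : Fin m → Fin 1) :
    iotaM k i (Ygen ⟨m, v⟩) = Ygen ⟨m, fun _ => i⟩ := by
  by_cases h2 : 2 ≤ m
  · rw [Ygen_eq_X h2]
    unfold iotaM
    rw [MvPolynomial.aeval_X]
  · rw [Ygen_eq_one (show m < 2 by omega), map_one,
      Ygen_eq_one (show m < 2 by omega)]

lemma subword_const (i : Fin k) (B : Finset (Fin n)) :
    subword (fun _ => i) B = fun _ => i := rfl

lemma iota_Yprod (i : Fin k) {m : ℕ} (v : Fin m → Fin 1) (s : Setoid (Fin m)) :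
    iotaM k i (Yprod v s) = Yprod (fun _ => i) s := by
  unfold Yprod
  rw [map_prod]
  apply Finset.prod_congr rfl
  intro B _
  rw [iota_Ygen]
  congr 1

lemma eps_iota (i : Fin k) (x : Yalg 1) : εk k (iotaM k i x) = εk 1 x := by
  have h : (εk k).comp (iotaM k i) = εk 1 := by
    apply MvPolynomial.algHom_ext
    rintro ⟨⟨m, v⟩, h2⟩
    rw [AlgHom.comp_apply]
    have e1 : iotaM k i (MvPolynomial.X (⟨⟨m, v⟩, h2⟩ : {p : WordIdx 1 // 2 ≤ p.1}))
        = Ygen ⟨m, fun _ => i⟩ := by unfold iotaM; rw [MvPolynomial.aeval_X]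
    rw [e1, εk_Ygen_of_two_le (p := ⟨m, fun _ => i⟩) (show (2:ℕ) ≤ m from h2)]
    simp [εk]
  exact AlgHom.congr_fun h x

lemma chi_iota (i : Fin k) (α : Dist k) (x : Yalg 1) :
    charOf α (iotaM k i x) = charOf (margFam α i) x := by
  have h : (charOf α).comp (iotaM k i) = charOf (margFam α i) := by
    apply MvPolynomial.algHom_ext
    rintro ⟨⟨m, v⟩, h2⟩
    rw [AlgHom.comp_apply]
    have e1 : iotaM k i (MvPolynomial.X (⟨⟨m, v⟩, h2⟩ : {p : WordIdx 1 // 2 ≤ p.1}))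
        = Ygen ⟨m, fun _ => i⟩ := by unfold iotaM; rw [MvPolynomial.aeval_X]
    rw [e1, Ygen_eq_X (p := ⟨m, fun _ => i⟩) (show (2:ℕ) ≤ m from h2)]
    simp [charOf, margFam]
  exact AlgHom.congr_fun h x

lemma delta_iota (i : Fin k) (x : Yalg 1) :
    Δk k (iotaM k i x) =
      Algebra.TensorProduct.map (iotaM k i) (iotaM k i) (Δk 1 x) := by
  have h : (Δk k).comp (iotaM k i) =
      (Algebra.TensorProduct.map (iotaM k i) (iotaM k i)).comp (Δk 1) := by
    apply MvPolynomial.algHom_ext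
    rintro ⟨⟨m, v⟩, h2⟩
    rw [AlgHom.comp_apply, AlgHom.comp_apply]
    have e1 : iotaM k i (MvPolynomial.X (⟨⟨m, v⟩, h2⟩ : {p : WordIdx 1 // 2 ≤ p.1}))
        = Ygen ⟨m, fun _ => i⟩ := by unfold iotaM; rw [MvPolynomial.aeval_X]
    have e2 : (MvPolynomial.X (⟨⟨m, v⟩, h2⟩ : {p : WordIdx 1 // 2 ≤ p.1}) : Yalg 1)
        = Ygen ⟨m, v⟩ := (Ygen_eq_X h2).symm
    rw [e1, e2, Δk_Ygen (show (2:ℕ) ≤ m from h2) (fun _ => i),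
      Δk_Ygen (show (2:ℕ) ≤ m from h2) v, map_sum]
    apply Finset.sum_congr rfl
    intro π _
    rw [Algebra.TensorProduct.map_tmul, iota_Yprod, iota_Yprod]
  exact AlgHom.congr_fun h x

lemma P_iota (i : Fin k) (α : Dist k) (m : ℕ) : ∀ x : Yalg 1,
    convPowF (Δk k) (εk k).toLinearMap
      ((εk k).toLinearMap - (charOf α).toLinearMap) m (iotaM k i x) =
    convPowF (Δk 1) (εk 1).toLinearMap
      ((εk 1).toLinearMap - (charOf (margFam α i)).toLinearMap) m x := by
  induction m with
  | zero =>
    intro x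
    show (εk k).toLinearMap (iotaM k i x) = (εk 1).toLinearMap x
    rw [AlgHom.toLinearMap_apply, AlgHom.toLinearMap_apply]
    exact eps_iota i x
  | succ m ih =>
    intro x
    show convF _ _ _ (iotaM k i x) = convF _ _ _ x
    unfold convF
    simp only [LinearMap.comp_apply, AlgHom.toLinearMap_apply]
    rw [delta_iota]
    have key : ∀ t : Yalg 1 ⊗[ℂ] Yalg 1,
        LinearMap.mul' ℂ ℂ (TensorProduct.map
          (convPowF (Δk k) (εk k).toLinearMap
            ((εk k).toLinearMap - (charOf α).toLinearMap) m)
          ((εk k).toLinearMap - (charOf α).toLinearMap)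
          (Algebra.TensorProduct.map (iotaM k i) (iotaM k i) t)) =
        LinearMap.mul' ℂ ℂ (TensorProduct.map
          (convPowF (Δk 1) (εk 1).toLinearMap
            ((εk 1).toLinearMap - (charOf (margFam α i)).toLinearMap) m)
          ((εk 1).toLinearMap - (charOf (margFam α i)).toLinearMap) t) := by
      intro t
      induction t using TensorProduct.induction_on with
      | zero => simp
      | tmul a b =>
        rw [Algebra.TensorProduct.map_tmul, TensorProduct.map_tmul,
          TensorProduct.map_tmul, LinearMap.mul'_apply, LinearMap.mul'_apply, ih a]
        congr 1
        rw [LinearMap.sub_apply, LinearMap.sub_apply, AlgHom.toLinearMap_apply,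
          AlgHom.toLinearMap_apply, AlgHom.toLinearMap_apply,
          AlgHom.toLinearMap_apply, eps_iota, chi_iota]
      | add t1 t2 h1 h2 =>
        rw [map_add, map_add, map_add, map_add, map_add, h1, h2]
    exact key (Δk 1 x)

/-- Key computation 3 (unconditional): the log-coefficients of constant words agree
with those of the marginal distribution. -/
lemma L_marginal (i : Fin k) (α : Dist k) (n : ℕ) :
    logFunF (Δk k) (εk k).toLinearMap (charOf α).toLinearMap (Ygen ⟨n, fun _ => i⟩) =
    logFunF (Δk 1) (εk 1).toLinearMap (charOf (margFam α i)).toLinearMap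
      (Ygen ⟨n, fun _ => (0 : Fin 1)⟩) := by
  have h : Ygen ⟨n, fun _ => i⟩ = iotaM k i (Ygen ⟨n, fun _ => (0 : Fin 1)⟩) :=
    (iota_Ygen i n _).symm
  rw [h]
  unfold logFunF
  congr 1
  apply tsum_congr
  intro ℓ
  rw [P_iota]

end HelperG

/-- Proposition 5.4.  For `μ ∈ G_k` with marginals `μ_i ∈ G_1`
(whose free cumulants are `Cf_{(i,…,i)}(R_μ)`), the following are equivalent:
(1) all mixed coefficients of `R_μ` vanish (free independence);
(2) `LS_μ` separates the variables, `LS_μ = u_1(z_1) + ⋯ + u_k(z_k)`;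
(3) `LS_μ(z_1,…,z_k) = LS_{μ_1}(z_1) + ⋯ + LS_{μ_k}(z_k)`. -/
theorem LS_separates_variables_iff_free (k : ℕ) (hk : 1 ≤ k) (μ α : Dist k)
    (hμ : InG μ) (hα : IsRTransform μ α) :
    -- (1) ↔ (2)
    ((∀ (n : ℕ) (w : Fin n → Fin k), 2 ≤ n → (¬ ∃ i, ∀ j, w j = i) → α ⟨n, w⟩ = 0) ↔
      (∃ u : Fin k → ℕ → ℂ, ∀ (n : ℕ), 2 ≤ n →
        (∀ i : Fin k,
          logFunF (Δk k) (εk k).toLinearMap (charOf α).toLinearMap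
            (Ygen ⟨n, fun _ => i⟩) = u i n) ∧
        (∀ w : Fin n → Fin k, (¬ ∃ i, ∀ j, w j = i) →
          logFunF (Δk k) (εk k).toLinearMap (charOf α).toLinearMap (Ygen ⟨n, w⟩) = 0))) ∧
    -- (1) ↔ (3)
    ((∀ (n : ℕ) (w : Fin n → Fin k), 2 ≤ n → (¬ ∃ i, ∀ j, w j = i) → α ⟨n, w⟩ = 0) ↔
      (∀ (n : ℕ), 2 ≤ n →
        (∀ i : Fin k,
          logFunF (Δk k) (εk k).toLinearMap (charOf α).toLinearMap
            (Ygen ⟨n, fun _ => i⟩) =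
          logFunF (Δk 1) (εk 1).toLinearMap (charOf (margFam α i)).toLinearMap
            (Ygen ⟨n, fun _ => 0⟩)) ∧
        (∀ w : Fin n → Fin k, (¬ ∃ i, ∀ j, w j = i) →
          logFunF (Δk k) (εk k).toLinearMap (charOf α).toLinearMap (Ygen ⟨n, w⟩) = 0))) := by
  have hk0 : 0 < k := hk
  constructor
  · constructor
    · intro H1
      refine ⟨fun i m => logFunF (Δk k) (εk k).toLinearMap (charOf α).toLinearMap
        (Ygen ⟨m, fun _ => i⟩), fun n hn => ⟨fun i => rfl, fun w hw =>
          L_mixed_eq_zero hk0 H1 hn hw⟩⟩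
    · rintro ⟨u, hu⟩
      exact mixed_cumulant_vanish hk0 hμ hα fun n w hn hw => (hu n hn).2 w hw
  · constructor
    · intro H1
      exact fun n hn => ⟨fun i => L_marginal i α n,
        fun w hw => L_mixed_eq_zero hk0 H1 hn hw⟩
    · intro H3
      exact mixed_cumulant_vanish hk0 hμ hα fun n w hn hw => (H3 n hn).2 w hw


end FreeProb

end
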